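/- Let W be the complete wheel graph on n ≥ 6 vertices. Every set of vertices satisfying the condition 'if c_i ∉ L and c_{i+1} ∉ L then c_{i−3}, c_{i−2}, c_{i−1}, c_{i+2}, c_{i+3}, c_{i+4} ∈ L (indices modulo n−1)' contains at least ⌊n/2⌋ cycle vertices. Moreover, if L ⊆ C ∪ {h} satisfies |L ∩ C| ≥ 4, then for every i the pair h, c_i is separated by at least two vertices of L ∩ C, and hence if such an L is an AP 2-landmark set then so is L \ {h}. -/

import Mathlib

/-- `L` is an AP `k`-landmark set of `G`: every pair of distinct vertices of `V` is
separated (i.e. has different distances) by at least `k` vertices of `L`. -/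
def isAPLandmark {V : Type*} (G : SimpleGraph V) (k : ℕ) (L : Finset V) : Prop :=
  ∀ u v : V, u ≠ v → k ≤ (L.filter fun τ => G.dist u τ ≠ G.dist v τ).card

/-- The complete wheel graph with cycle `c_1, …, c_m` (encoded as `some i` for
`i : ZMod m`) and central vertex `h` (encoded as `none`); a wheel on `n` vertices has
`m = n - 1`. -/
def wheelGraph (m : ℕ) : SimpleGraph (Option (ZMod m)) :=
  SimpleGraph.fromRel fun u v => u = none ∨ ∃ i : ZMod m, u = some i ∧ v = some (i + 1)

/-- The AP `k = 2` condition on a set of vertices of the wheel: whenever two consecutive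
cycle vertices `c_i, c_{i+1}` are not in `L`, the three cycle vertices preceding them and
the three cycle vertices following them are in `L`. -/
def apCond2 (m : ℕ) (L : Finset (Option (ZMod m))) : Prop :=
  ∀ i : ZMod m, some i ∉ L → some (i + 1) ∉ L →
    some (i - 3) ∈ L ∧ some (i - 2) ∈ L ∧ some (i - 1) ∈ L ∧
    some (i + 2) ∈ L ∧ some (i + 3) ∈ L ∧ some (i + 4) ∈ L

lemma wheel_adj_none_some (m : ℕ) (j : ZMod m) : (wheelGraph m).Adj none (some j) := by
  simp [wheelGraph, SimpleGraph.fromRel_adj]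

lemma wheel_dist_none_some (m : ℕ) (j : ZMod m) :
    (wheelGraph m).dist none (some j) = 1 :=
  SimpleGraph.dist_eq_one_iff_adj.2 (wheel_adj_none_some m j)

lemma wheel_dist_some_none (m : ℕ) (j : ZMod m) :
    (wheelGraph m).dist (some j) none = 1 :=
  SimpleGraph.dist_eq_one_iff_adj.2 (wheel_adj_none_some m j).symm

lemma wheel_adj_some_some {m : ℕ} {i j : ZMod m}
    (h : (wheelGraph m).Adj (some i) (some j)) : j = i + 1 ∨ i = j + 1 := by
  rw [wheelGraph, SimpleGraph.fromRel_adj] at h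
  obtain ⟨-, h | h⟩ := h
  · rcases h with h | ⟨k, hk1, hk2⟩
    · exact absurd h (by simp)
    · left; simp only [Option.some.injEq] at hk1 hk2; rw [hk1, hk2]
  · rcases h with h | ⟨k, hk1, hk2⟩
    · exact absurd h (by simp)
    · right; simp only [Option.some.injEq] at hk1 hk2; rw [hk1, hk2]

/-- Separation of `h` and `c_i` by at least two cycle vertices of `L`. -/
lemma wheel_sep_none (m : ℕ) (L : Finset (Option (ZMod m)))
    (hL : 4 ≤ (L.filter fun x => x ≠ none).card) (i : ZMod m) :
    2 ≤ ((L.filter fun x => x ≠ none).filter fun τ =>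
      (wheelGraph m).dist none τ ≠ (wheelGraph m).dist (some i) τ).card := by
  set T := L.filter fun x => x ≠ none with hT
  have hsub : (T.filter fun τ => ¬ ((wheelGraph m).dist none τ ≠ (wheelGraph m).dist (some i) τ))
      ⊆ {some (i + 1), some (i - 1)} := by
    intro τ hτ
    simp only [Finset.mem_filter, not_not] at hτ
    obtain ⟨hτT, heq⟩ := hτ
    have hne : τ ≠ none := (Finset.mem_filter.1 hτT).2
    obtain ⟨j, rfl⟩ := Option.ne_none_iff_exists'.1 hne
    rw [wheel_dist_none_some] at heq
    have hadj : (wheelGraph m).Adj (some i) (some j) :=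
      SimpleGraph.dist_eq_one_iff_adj.1 heq.symm
    rcases wheel_adj_some_some hadj with h | h
    · simp [h]
    · have : j = i - 1 := by rw [h]; ring
      simp [this]
  have h2 : (T.filter fun τ => ¬ ((wheelGraph m).dist none τ ≠ (wheelGraph m).dist (some i) τ)).card
      ≤ 2 := by
    calc _ ≤ ({some (i + 1), some (i - 1)} : Finset (Option (ZMod m))).card :=
          Finset.card_le_card hsub
      _ ≤ 2 := Finset.card_insert_le _ _ |>.trans (by simp)
  have := Finset.card_filter_add_card_filter_not
    (s := T) (fun τ => (wheelGraph m).dist none τ ≠ (wheelGraph m).dist (some i) τ)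
  omega

/-- For the complete wheel graph on `n ≥ 6` vertices: every vertex set satisfying the AP
`k = 2` condition contains at least `⌊n/2⌋` cycle vertices; and for every `L` with at
least `4` cycle vertices, each pair `h, c_i` is separated by at least two vertices of
`L ∩ C`, hence if such an `L` is an AP `2`-landmark set then so is `L \ {h}`. -/
theorem stmt_14 (n : ℕ) (hn : 6 ≤ n) :
    (∀ L : Finset (Option (ZMod (n - 1))), apCond2 (n - 1) L →
      n / 2 ≤ (L.filter fun x => x ≠ none).card) ∧
    (∀ L : Finset (Option (ZMod (n - 1))), 4 ≤ (L.filter fun x => x ≠ none).card →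
      (∀ i : ZMod (n - 1),
        2 ≤ ((L.filter fun x => x ≠ none).filter fun τ =>
          (wheelGraph (n - 1)).dist none τ ≠ (wheelGraph (n - 1)).dist (some i) τ).card) ∧
      (isAPLandmark (wheelGraph (n - 1)) 2 L →
        isAPLandmark (wheelGraph (n - 1)) 2 (L.erase none))) := by
  have hm : 5 ≤ n - 1 := by omega
  haveI : NeZero (n - 1) := ⟨by omega⟩
  set m := n - 1 with hmdef
  constructor
  · -- counting part
    intro L hap
    set S : Finset (ZMod m) := Finset.univ.filter (fun i => some i ∈ L) with hS
    set M : Finset (ZMod m) := Finset.univ.filter (fun i => some i ∉ L) with hM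
    -- the filter equals the image of S under some
    have himg : L.filter (fun x => x ≠ none) = S.image Option.some := by
      ext x
      cases x with
      | none => simp
      | some j => simp [hS]
    have hcard : (L.filter fun x => x ≠ none).card = S.card := by
      rw [himg, Finset.card_image_of_injective _ (Option.some_injective _)]
    -- injection from M into S
    have hinj : M.card ≤ S.card := by
      apply Finset.card_le_card_of_injOn (fun i => if some (i + 1) ∈ L then i + 1 else i - 1)
      · intro i hi
        simp only [hM, Finset.coe_filter, Set.mem_setOf_eq, Finset.mem_filter, Finset.mem_univ, true_and] at hi
        by_cases h1 : some (i + 1) ∈ L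
        · simp only [h1, if_true, hS, Finset.coe_filter, Set.mem_setOf_eq, Finset.mem_filter, Finset.mem_univ, true_and]
        · simp only [h1, if_false, hS, Finset.coe_filter, Set.mem_setOf_eq, Finset.mem_filter, Finset.mem_univ, true_and]
          exact (hap i hi h1).2.2.1
      · intro i hi j hj hij
        simp only [hM, Finset.coe_filter, Set.mem_setOf_eq, Finset.mem_univ, true_and] at hi hj
        by_cases h1 : some (i + 1) ∈ L <;> by_cases h2 : some (j + 1) ∈ L <;>
          simp only [h1, h2, if_true, if_false] at hij
        · exact add_right_cancel hij
        · -- i + 1 = j - 1, so j = i + 2, and the gap (j, j+1) forces j - 2 = i ∈ L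
          exfalso
          have hj2 : some (j - 2) ∈ L := (hap j hj h2).2.1
          have : j - 2 = i := by linear_combination -hij
          rw [this] at hj2
          exact hi hj2
        · exfalso
          have hi2 : some (i - 2) ∈ L := (hap i hi h1).2.1
          have : i - 2 = j := by linear_combination hij
          rw [this] at hi2
          exact hj hi2
        · have : i - 1 + 1 = j - 1 + 1 := by rw [hij]
          simpa using this
    have hsum : S.card + M.card = m := by
      have := Finset.card_filter_add_card_filter_not
        (s := (Finset.univ : Finset (ZMod m))) (fun i => some i ∈ L)
      rw [Finset.card_univ, ZMod.card] at this
      exact this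
    rw [hcard]
    omega
  · -- separation part
    intro L hL
    refine ⟨wheel_sep_none m L hL, ?_⟩
    intro hland u v huv
    have herase : L.erase none = L.filter (fun x => x ≠ none) := (Finset.filter_ne' L none).symm
    match u, v with
    | none, none => exact absurd rfl huv
    | none, some i =>
      calc 2 ≤ ((L.filter fun x => x ≠ none).filter fun τ =>
            (wheelGraph m).dist none τ ≠ (wheelGraph m).dist (some i) τ).card :=
          wheel_sep_none m L hL i
        _ = _ := by rw [herase]
    | some i, none =>
      have h1 := wheel_sep_none m L hL i
      calc 2 ≤ ((L.filter fun x => x ≠ none).filter fun τ =>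
            (wheelGraph m).dist none τ ≠ (wheelGraph m).dist (some i) τ).card := h1
        _ ≤ _ := by
          rw [herase]
          apply Finset.card_le_card
          intro τ hτ
          simp only [Finset.mem_filter] at hτ ⊢
          exact ⟨hτ.1, Ne.symm hτ.2⟩
    | some i, some j =>
      have h2 := hland (some i) (some j) huv
      refine le_trans h2 (Finset.card_le_card ?_)
      intro τ hτ
      simp only [Finset.mem_filter] at hτ ⊢
      refine ⟨Finset.mem_erase.2 ⟨?_, hτ.1⟩, hτ.2⟩
      rintro rfl
      apply hτ.2
      rw [wheel_dist_some_none, wheel_dist_some_none]
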